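/- There exists a constant C > 0 such that for every Λ > 2 and every a ∈ ℂ, E(log⁻|1 − aN| | N ≥ Λ) ≥ −C log Λ, where N is a standard normal random variable and log⁻ t = min(log t, 0). -/

import Mathlib

open MeasureTheory Set Real Filter

private lemma aux_neglog {u : ℝ} (hu : 0 < u) : -(2 / Real.sqrt u) ≤ Real.log u := by
  have hs : 0 < Real.sqrt u := Real.sqrt_pos.2 hu
  have h1 : Real.log (Real.sqrt u)⁻¹ ≤ (Real.sqrt u)⁻¹ - 1 :=
    Real.log_le_sub_one_of_pos (by positivity)
  rw [Real.log_inv] at h1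
  have h2 : Real.log u = 2 * Real.log (Real.sqrt u) := by
    rw [Real.log_sqrt hu.le]; ring
  have h3 : (Real.sqrt u)⁻¹ ≤ 2 / (2 * Real.sqrt u) := by
    rw [le_div_iff₀ (by positivity)]
    field_simp
    exact le_rfl
  have : -Real.log (Real.sqrt u) ≤ (Real.sqrt u)⁻¹ := by linarith
  have := mul_le_mul_of_nonneg_left this (by norm_num : (0:ℝ) ≤ 2)
  rw [div_eq_mul_inv]
  nlinarith [h2]

private lemma aux_sqrt_rpow (u : ℝ) : 2 / Real.sqrt u = 2 * u ^ (-(1/2) : ℝ) := by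
  rcases lt_trichotomy u 0 with h | rfl | h
  · rw [Real.sqrt_eq_zero_of_nonpos h.le, Real.rpow_def_of_neg h]
    have hc : Real.cos (-(1/2) * π) = 0 := by
      rw [show (-(1/2):ℝ) * π = -(π/2) by ring, Real.cos_neg]
      exact Real.cos_pi_div_two
    simp [hc]
    rw [show (2:ℝ)⁻¹ * π = π/2 by ring]
    exact Real.cos_pi_div_two
  · simp
  · rw [Real.sqrt_eq_rpow, Real.rpow_neg h.le, div_eq_mul_inv]

private lemma aux_int_sqrt {δ : ℝ} (hδ : 0 ≤ δ) :
    ∫ u in (0:ℝ)..δ, 2 / Real.sqrt u = 4 * Real.sqrt δ := by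
  simp_rw [aux_sqrt_rpow]
  rw [intervalIntegral.integral_const_mul, integral_rpow (Or.inl (by norm_num))]
  rw [Real.sqrt_eq_rpow]
  norm_num
  ring

private lemma aux_intervalInt_sqrt (c : ℝ) {δ : ℝ} (hδ : 0 ≤ δ) :
    IntervalIntegrable (fun u : ℝ => 2 / Real.sqrt u) volume 0 δ := by
  simp_rw [aux_sqrt_rpow]
  exact (intervalIntegral.intervalIntegrable_rpow' (by norm_num)).const_mul 2

example : True := trivial
private lemma key_real {Λ x r δ t : ℝ} (hΛ : 2 < Λ) (hx : Λ < x) (hr : 0 ≤ r)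
    (hδ : δ = (Λ⁻¹)^2) (ht : t = r⁻¹) (hxt : x ≠ t) {B : ℝ} (hB : |1 - r * x| ≤ B) :
    -(Real.log 2 + 3 * Real.log Λ + (x / Λ - 1) + (Set.Ioo t (t+δ)).indicator
        (fun y => 2 / Real.sqrt (y - t)) x + (Set.Ioo (t-δ) t).indicator
        (fun y => 2 / Real.sqrt (t - y)) x)
      ≤ min (Real.log B) 0 := by
  set g₁ : ℝ → ℝ := (Set.Ioo t (t+δ)).indicator (fun y => 2 / Real.sqrt (y - t)) with hg1_def
  set g₂ : ℝ → ℝ := (Set.Ioo (t-δ) t).indicator (fun y => 2 / Real.sqrt (t - y)) with hg2_def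
  have hΛ0 : (0:ℝ) < Λ := by linarith
  have hx0 : (0:ℝ) < x := by linarith
  have hδ0 : (0:ℝ) < δ := by rw [hδ]; positivity
  have hlogΛ : (0:ℝ) < Real.log Λ := Real.log_pos (by linarith)
  have hlog2 : (0:ℝ) < Real.log 2 := Real.log_pos (by norm_num)
  have hxΛ : (0:ℝ) ≤ x / Λ - 1 := by
    rw [sub_nonneg, le_div_iff₀ hΛ0]; linarith
  have hg1x : 0 ≤ g₁ x := Set.indicator_nonneg (fun y _ => by positivity) x
  have hg2x : 0 ≤ g₂ x := Set.indicator_nonneg (fun y _ => by positivity) x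
  have hlog2x : Real.log (2*x) ≤ Real.log 2 + Real.log Λ + (x / Λ - 1) := by
    rw [Real.log_mul (by norm_num) hx0.ne']
    have h1 : Real.log (x/Λ) ≤ x/Λ - 1 := Real.log_le_sub_one_of_pos (by positivity)
    rw [Real.log_div hx0.ne' hΛ0.ne'] at h1
    linarith
  have hl2x0 : (0:ℝ) ≤ Real.log (2*x) := Real.log_nonneg (by linarith)
  rcases eq_or_lt_of_le hr with hr0 | hrpos
  · -- r = 0 : B ≥ 1
    have hB1 : (1:ℝ) ≤ B := by
      rw [← hr0] at hB; simpa using hB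
    have : (0:ℝ) ≤ Real.log B := Real.log_nonneg hB1
    exact le_min (by linarith) (by linarith)
  · -- r > 0
    have ht0 : 0 < t := by rw [ht]; positivity
    have hrt : r * t = 1 := by rw [ht]; field_simp
    have hA : |1 - r * x| = r * |x - t| := by
      have : 1 - r * x = r * (t - x) := by rw [mul_sub, hrt]
      rw [this, abs_mul, abs_of_pos hrpos, abs_sub_comm]
    have hu0 : 0 < |x - t| := abs_pos.2 (sub_ne_zero.2 hxt)
    rcases le_or_gt t (2*x) with h2x | h2x
    · -- main case t ≤ 2x
      have hrge : (2*x)⁻¹ ≤ r := by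
        have h := inv_anti₀ ht0 h2x
        rwa [ht, inv_inv] at h
      have hAge : |x - t| / (2*x) ≤ B := by
        refine le_trans ?_ (hA ▸ hB)
        rw [div_eq_mul_inv, mul_comm]
        exact mul_le_mul_of_nonneg_right hrge hu0.le
      have hq0 : 0 < |x - t| / (2*x) := by positivity
      have hmin1 : min (Real.log (|x - t| / (2*x))) 0 ≤ min (Real.log B) 0 :=
        min_le_min (Real.log_le_log hq0 hAge) le_rfl
      have hsplit : Real.log (|x - t| / (2*x)) = Real.log |x - t| - Real.log (2*x) :=
        Real.log_div hu0.ne' (by positivity)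
      have hmin2 : min (Real.log |x - t|) 0 - Real.log (2*x)
          ≤ min (Real.log (|x - t| / (2*x))) 0 := by
        rw [hsplit]
        refine le_min ?_ ?_
        · have := min_le_left (Real.log |x - t|) 0; linarith
        · have := min_le_right (Real.log |x - t|) 0; linarith
      have hclaim : -(2 * Real.log Λ + g₁ x + g₂ x) ≤ min (Real.log |x - t|) 0 := by
        rcases le_or_gt δ |x - t| with huδ | huδ
        · have hld : Real.log δ ≤ Real.log |x - t| := Real.log_le_log hδ0 huδ
          have hlogδ : Real.log δ = -(2 * Real.log Λ) := by
            rw [hδ, Real.log_pow, Real.log_inv]; push_cast; ring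
          exact le_min (by linarith) (by linarith)
        · rcases hxt.lt_or_gt with hlt | hgt
          · -- x < t, so g₂ x = 2 / √(t - x)
            have hxmem : x ∈ Set.Ioo (t - δ) t := by
              constructor
              · have : |x - t| = t - x := by rw [abs_sub_comm, abs_of_pos (by linarith)]
                linarith [this ▸ huδ]
              · exact hlt
            have hg2v : g₂ x = 2 / Real.sqrt (t - x) := by
              rw [hg2_def, Set.indicator_of_mem hxmem]
            have habs : |x - t| = t - x := by rw [abs_sub_comm, abs_of_pos (by linarith)]
            have hlb : -(2 / Real.sqrt |x - t|) ≤ Real.log |x - t| := aux_neglog hu0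
            refine le_trans ?_ (le_min hlb (neg_nonpos.2 (by positivity)))
            rw [habs] at *
            rw [hg2v]
            linarith [hg1x, hlogΛ]
          · -- t < x, so g₁ x = 2 / √(x - t)
            have hxmem : x ∈ Set.Ioo t (t + δ) := by
              constructor
              · exact hgt
              · have : |x - t| = x - t := abs_of_pos (by linarith)
                linarith [this ▸ huδ]
            have hg1v : g₁ x = 2 / Real.sqrt (x - t) := by
              rw [hg1_def, Set.indicator_of_mem hxmem]
            have habs : |x - t| = x - t := abs_of_pos (by linarith)
            have hlb : -(2 / Real.sqrt |x - t|) ≤ Real.log |x - t| := aux_neglog hu0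
            refine le_trans ?_ (le_min hlb (neg_nonpos.2 (by positivity)))
            rw [habs] at *
            rw [hg1v]
            linarith [hg2x, hlogΛ]
      have := le_trans (le_trans (by linarith : -(2 * Real.log Λ + g₁ x + g₂ x)
          - Real.log (2*x) ≤ min (Real.log |x - t|) 0 - Real.log (2*x)) hmin2) hmin1
      linarith
    · -- t > 2x : B ≥ 1/2
      have hBhalf : (1/2 : ℝ) ≤ B := by
        refine le_trans ?_ (hA ▸ hB)
        have h1 : t / 2 ≤ |x - t| := by
          rw [abs_sub_comm, abs_of_pos (by linarith)]; linarith
        have h2 : r * (t/2) ≤ r * |x - t| := mul_le_mul_of_nonneg_left h1 hrpos.le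
        have h3 : r * (t/2) = 1/2 := by rw [← mul_div_assoc, hrt]
        linarith
      have hlogB : -Real.log 2 ≤ Real.log B := by
        have := Real.log_le_log (by norm_num : (0:ℝ) < 1/2) hBhalf
        rw [show (1/2:ℝ) = 2⁻¹ by norm_num, Real.log_inv] at this
        linarith
      exact le_min (by linarith) (by linarith)
private lemma aux_g1_int (t : ℝ) {δ : ℝ} (hδ : 0 ≤ δ) :
    Integrable ((Set.Ioo t (t+δ)).indicator (fun y => 2 / Real.sqrt (y - t))) := by
  rw [integrable_indicator_iff measurableSet_Ioo]
  have h := (aux_intervalInt_sqrt 0 hδ).comp_sub_right t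
  rw [intervalIntegrable_iff_integrableOn_Ioo_of_le (by linarith)] at h
  simpa [add_comm] using h

private lemma aux_g2_int (t : ℝ) {δ : ℝ} (hδ : 0 ≤ δ) :
    Integrable ((Set.Ioo (t-δ) t).indicator (fun y => 2 / Real.sqrt (t - y))) := by
  rw [integrable_indicator_iff measurableSet_Ioo]
  have h := ((aux_intervalInt_sqrt 0 hδ).comp_sub_left t).symm
  rw [intervalIntegrable_iff_integrableOn_Ioo_of_le (by linarith)] at h
  simpa using h

private lemma aux_g1_val (t : ℝ) {δ : ℝ} (hδ : 0 ≤ δ) :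
    ∫ y, ((Set.Ioo t (t+δ)).indicator (fun y => 2 / Real.sqrt (y - t))) y
      = 4 * Real.sqrt δ := by
  rw [integral_indicator measurableSet_Ioo, ← integral_Ioc_eq_integral_Ioo,
    ← intervalIntegral.integral_of_le (by linarith)]
  rw [intervalIntegral.integral_comp_sub_right (fun u => 2 / Real.sqrt u) t]
  simp only [sub_self, add_sub_cancel_left]
  exact aux_int_sqrt hδ

private lemma aux_g2_val (t : ℝ) {δ : ℝ} (hδ : 0 ≤ δ) :
    ∫ y, ((Set.Ioo (t-δ) t).indicator (fun y => 2 / Real.sqrt (t - y))) y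
      = 4 * Real.sqrt δ := by
  rw [integral_indicator measurableSet_Ioo, ← integral_Ioc_eq_integral_Ioo,
    ← intervalIntegral.integral_of_le (by linarith)]
  rw [intervalIntegral.integral_comp_sub_left (fun u => 2 / Real.sqrt u) t]
  simp only [sub_self, sub_sub_cancel]
  exact aux_int_sqrt hδ

private lemma aux_w_int : Integrable (fun x : ℝ => Real.exp (-x^2/2)) := by
  have h : ∀ x : ℝ, -(1/2:ℝ) * x^2 = -x^2/2 := fun x => by ring
  have h2 := integrable_exp_neg_mul_sq (b := (1/2:ℝ)) (by norm_num)
  simp_rw [h] at h2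
  exact h2

private lemma aux_xw_int : Integrable (fun x : ℝ => x * Real.exp (-x^2/2)) := by
  have h : ∀ x : ℝ, -(1/2:ℝ) * x^2 = -x^2/2 := fun x => by ring
  have h2 := integrable_mul_exp_neg_mul_sq (b := (1/2:ℝ)) (by norm_num)
  simp_rw [h] at h2
  exact h2

private lemma aux_xw_val (Λ : ℝ) :
    ∫ x in Set.Ioi Λ, x * Real.exp (-x^2/2) = Real.exp (-Λ^2/2) := by
  have hderiv : ∀ y ∈ Set.Ici Λ,
      HasDerivAt (fun x : ℝ => -Real.exp (-x^2/2)) (y * Real.exp (-y^2/2)) y := by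
    intro y _
    have h1 : HasDerivAt (fun x : ℝ => -x^2/2) (-y) y := by
      have h := ((hasDerivAt_pow 2 y).neg.div_const 2)
      refine h.congr_deriv ?_
      simp
      ring
    have h2 := (h1.exp).neg
    refine h2.congr_deriv ?_
    ring
  have htend : Tendsto (fun x : ℝ => -Real.exp (-x^2/2)) atTop (nhds 0) := by
    rw [show (0:ℝ) = -0 by simp]
    apply Filter.Tendsto.neg
    apply Real.tendsto_exp_atBot.comp
    have h1 : Tendsto (fun x : ℝ => x^2/2) atTop atTop :=
      (tendsto_pow_atTop two_ne_zero).atTop_div_const (by norm_num)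
    have h2 := tendsto_neg_atTop_atBot.comp h1
    have h3 : ((fun x:ℝ => -x) ∘ (fun x:ℝ => x^2/2)) = fun x:ℝ => -x^2/2 := by
      funext x; simp; ring
    rwa [h3] at h2
  have h := integral_Ioi_of_hasDerivAt_of_tendsto' hderiv aux_xw_int.integrableOn htend
  rw [h]
  simp

private lemma aux_D_lb {Λ : ℝ} (hΛ : 2 < Λ) :
    Real.exp (-Λ^2/2) ≤ 8 * Λ * ∫ x in Set.Ioi Λ, Real.exp (-x^2/2) := by
  have hΛ0 : (0:ℝ) < Λ := by linarith
  have hΛi : (0:ℝ) < Λ⁻¹ := by positivity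
  have hΛi1 : Λ⁻¹ < 1 := by
    rw [inv_lt_one_iff₀]
    right; linarith
  have hc : ∀ x ∈ Set.Ioo Λ (Λ+Λ⁻¹), Real.exp (-Λ^2/2 - 2) ≤ Real.exp (-x^2/2) := by
    intro x hx
    apply Real.exp_le_exp.2
    have h1 : x < Λ + Λ⁻¹ := hx.2
    have h2 : Λ < x := hx.1
    nlinarith [sq_nonneg (x - Λ), mul_inv_cancel₀ (ne_of_gt hΛ0)]
  have h1 := setIntegral_ge_of_const_le measurableSet_Ioo
    (by rw [Real.volume_Ioo]; exact ENNReal.ofReal_ne_top) hc aux_w_int.integrableOn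
  have hvol : (volume (Set.Ioo Λ (Λ+Λ⁻¹))).toReal = Λ⁻¹ := by
    rw [Real.volume_Ioo, show Λ + Λ⁻¹ - Λ = Λ⁻¹ by ring, ENNReal.toReal_ofReal hΛi.le]
  rw [measureReal_def, hvol] at h1
  have h2 : ∫ x in Set.Ioo Λ (Λ+Λ⁻¹), Real.exp (-x^2/2)
      ≤ ∫ x in Set.Ioi Λ, Real.exp (-x^2/2) :=
    setIntegral_mono_set aux_w_int.integrableOn
      (Filter.Eventually.of_forall fun x => (Real.exp_pos _).le)
      (HasSubset.Subset.eventuallyLE (fun y hy => hy.1))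
  have hexp8 : Real.exp 2 ≤ 8 := by
    have h := Real.exp_one_lt_d9
    have h2 : Real.exp 2 = Real.exp 1 * Real.exp 1 := by
      rw [← Real.exp_add]; norm_num
    nlinarith [Real.exp_pos 1]
  have hexp2 : (1/8:ℝ) ≤ Real.exp (-2) := by
    rw [Real.exp_neg]
    rw [le_inv_comm₀ (by norm_num) (Real.exp_pos 2)]
    linarith
  have hEE : Real.exp (-Λ^2/2 - 2) = Real.exp (-Λ^2/2) * Real.exp (-2) := by
    rw [← Real.exp_add]
    ring_nf
  have key : Real.exp (-Λ^2/2) * Real.exp (-2) * Λ⁻¹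
      ≤ ∫ x in Set.Ioi Λ, Real.exp (-x^2/2) := by
    rw [smul_eq_mul] at h1; rw [← hEE]; linarith
  have h3 := mul_le_mul_of_nonneg_left key (by positivity : (0:ℝ) ≤ 8*Λ)
  have h4 : 8*Λ*(Real.exp (-Λ^2/2) * Real.exp (-2) * Λ⁻¹)
      = 8 * Real.exp (-Λ^2/2) * Real.exp (-2) := by
    field_simp
  rw [h4] at h3
  nlinarith [Real.exp_pos (-Λ^2/2)]
private lemma main_est {Λ : ℝ} (hΛ : 2 < Λ) (F g₁ g₂ : ℝ → ℝ) (t : ℝ)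
    (hF_meas : AEStronglyMeasurable F (volume.restrict (Set.Ioi Λ)))
    (hF_nonpos : ∀ x, F x ≤ 0)
    (hg1_int : Integrable g₁) (hg2_int : Integrable g₂)
    (hg1_nonneg : ∀ x, 0 ≤ g₁ x) (hg2_nonneg : ∀ x, 0 ≤ g₂ x)
    (hg1_val : ∫ y, g₁ y ≤ 4 * Λ⁻¹) (hg2_val : ∫ y, g₂ y ≤ 4 * Λ⁻¹)
    (hkey : ∀ x ∈ Set.Ioi Λ, x ≠ t →
      -(Real.log 2 + 3 * Real.log Λ + (x / Λ - 1) + g₁ x + g₂ x) ≤ F x) :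
    -(200 * Real.log Λ) * (∫ x in Set.Ioi Λ, Real.exp (-x^2/2))
      ≤ ∫ x in Set.Ioi Λ, F x * Real.exp (-x^2/2) := by
  have hΛ0 : (0:ℝ) < Λ := by linarith
  have hlogΛ : (0:ℝ) < Real.log Λ := Real.log_pos (by linarith)
  have hlog2Λ : Real.log 2 ≤ Real.log Λ := Real.log_le_log (by norm_num) hΛ.le
  have hlog2lb : (0.6931471803:ℝ) < Real.log 2 := Real.log_two_gt_d9
  have hED := aux_D_lb hΛ
  have hD0 : (0:ℝ) < ∫ x in Set.Ioi Λ, Real.exp (-x^2/2) := by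
    nlinarith [Real.exp_pos (-Λ^2/2)]
  have hwcont : Continuous (fun x : ℝ => Real.exp (-x^2/2)) := by continuity
  have hwle1 : ∀ x : ℝ, ‖Real.exp (-x^2/2)‖ ≤ 1 := by
    intro x
    rw [Real.norm_eq_abs, abs_of_pos (Real.exp_pos _)]
    rw [Real.exp_le_one_iff]
    nlinarith [sq_nonneg x]
  have g1w : Integrable (fun x => g₁ x * Real.exp (-x^2/2)) := by
    have hb := hg1_int.bdd_mul hwcont.aestronglyMeasurable (Filter.Eventually.of_forall hwle1)
    exact hb.congr (Filter.Eventually.of_forall fun x => mul_comm _ _)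
  have g2w : Integrable (fun x => g₂ x * Real.exp (-x^2/2)) := by
    have hb := hg2_int.bdd_mul hwcont.aestronglyMeasurable (Filter.Eventually.of_forall hwle1)
    exact hb.congr (Filter.Eventually.of_forall fun x => mul_comm _ _)
  have heq : (fun x : ℝ => (Real.log 2 + 3 * Real.log Λ + (x / Λ - 1) + g₁ x + g₂ x)
        * Real.exp (-x^2/2))
      = fun x : ℝ => ((Real.log 2 + 3 * Real.log Λ - 1) * Real.exp (-x^2/2)
          + Λ⁻¹ * (x * Real.exp (-x^2/2)))
        + (g₁ x * Real.exp (-x^2/2) + g₂ x * Real.exp (-x^2/2)) := by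
    funext x
    have hx : x / Λ = Λ⁻¹ * x := by field_simp
    rw [hx]; ring
  have hHw_int : Integrable (fun x : ℝ =>
      (Real.log 2 + 3 * Real.log Λ + (x / Λ - 1) + g₁ x + g₂ x) * Real.exp (-x^2/2)) := by
    rw [heq]
    exact ((aux_w_int.const_mul _).add (aux_xw_int.const_mul _)).add (g1w.add g2w)
  have hH_nonneg : ∀ x ∈ Set.Ioi Λ,
      0 ≤ Real.log 2 + 3 * Real.log Λ + (x / Λ - 1) + g₁ x + g₂ x := by
    intro x hx
    have hx' : Λ < x := hx
    have h1 : (0:ℝ) ≤ x / Λ - 1 := by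
      rw [sub_nonneg, le_div_iff₀ hΛ0]; linarith
    have := hg1_nonneg x; have := hg2_nonneg x
    linarith
  have haet : ∀ᵐ x : ℝ ∂volume, x ≠ t := by
    refine ae_iff.2 ?_
    rw [show {x : ℝ | ¬ x ≠ t} = {t} by ext y; simp]
    exact Real.volume_singleton
  have hFw_int : IntegrableOn (fun x => F x * Real.exp (-x^2/2)) (Set.Ioi Λ) := by
    refine Integrable.mono' hHw_int.integrableOn
      (hF_meas.mul (hwcont.aestronglyMeasurable.restrict)) ?_
    have haem := ae_restrict_mem (μ := volume) (s := Set.Ioi Λ) measurableSet_Ioi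
    filter_upwards [ae_restrict_of_ae haet, haem] with x hxt hxm
    have hk := hkey x hxm hxt
    have hwpos : (0:ℝ) < Real.exp (-x^2/2) := Real.exp_pos _
    rw [norm_mul, Real.norm_eq_abs, Real.norm_eq_abs, abs_of_pos hwpos]
    refine mul_le_mul_of_nonneg_right ?_ hwpos.le
    rw [abs_le]
    exact ⟨by linarith, le_trans (hF_nonpos x) (hH_nonneg x hxm)⟩
  have hneg_int : IntegrableOn (fun x : ℝ =>
      (-(Real.log 2 + 3 * Real.log Λ + (x / Λ - 1) + g₁ x + g₂ x)) * Real.exp (-x^2/2))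
      (Set.Ioi Λ) := by
    have h := (hHw_int.integrableOn (s := Set.Ioi Λ)).neg
    exact h.congr (Filter.Eventually.of_forall fun x => by simp only [Pi.neg_apply]; ring)
  have hmono : ∫ x in Set.Ioi Λ,
        (-(Real.log 2 + 3 * Real.log Λ + (x / Λ - 1) + g₁ x + g₂ x)) * Real.exp (-x^2/2)
      ≤ ∫ x in Set.Ioi Λ, F x * Real.exp (-x^2/2) := by
    refine setIntegral_mono_on_ae hneg_int hFw_int measurableSet_Ioi ?_
    filter_upwards [haet] with x hxt hxm
    exact mul_le_mul_of_nonneg_right (hkey x hxm hxt) (Real.exp_pos _).le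
  have hleft : ∫ x in Set.Ioi Λ,
        (-(Real.log 2 + 3 * Real.log Λ + (x / Λ - 1) + g₁ x + g₂ x)) * Real.exp (-x^2/2)
      = -(∫ x in Set.Ioi Λ,
        (Real.log 2 + 3 * Real.log Λ + (x / Λ - 1) + g₁ x + g₂ x) * Real.exp (-x^2/2)) := by
    simp_rw [neg_mul]
    exact integral_neg _
  -- bound the H integral
  have hwE : ∀ x ∈ Set.Ioi Λ, Real.exp (-x^2/2) ≤ Real.exp (-Λ^2/2) := by
    intro x hx
    have hx' : Λ < x := hx
    apply Real.exp_le_exp.2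
    nlinarith
  have hG1 : ∫ x in Set.Ioi Λ, g₁ x * Real.exp (-x^2/2)
      ≤ Real.exp (-Λ^2/2) * (4 * Λ⁻¹) := by
    have hstep1 : ∫ x in Set.Ioi Λ, g₁ x * Real.exp (-x^2/2)
        ≤ ∫ x in Set.Ioi Λ, Real.exp (-Λ^2/2) * g₁ x := by
      refine setIntegral_mono_on g1w.integrableOn
        ((hg1_int.const_mul _).integrableOn) measurableSet_Ioi ?_
      intro x hx
      rw [mul_comm (Real.exp (-Λ^2/2)) (g₁ x)]
      exact mul_le_mul_of_nonneg_left (hwE x hx) (hg1_nonneg x)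
    have hstep2 : ∫ x in Set.Ioi Λ, Real.exp (-Λ^2/2) * g₁ x
        ≤ ∫ x : ℝ, Real.exp (-Λ^2/2) * g₁ x :=
      setIntegral_le_integral (hg1_int.const_mul _)
        (Filter.Eventually.of_forall fun x => mul_nonneg (Real.exp_pos _).le (hg1_nonneg x))
    have hstep3 : ∫ x : ℝ, Real.exp (-Λ^2/2) * g₁ x = Real.exp (-Λ^2/2) * ∫ x : ℝ, g₁ x :=
      integral_const_mul _ _
    have hstep4 : Real.exp (-Λ^2/2) * ∫ x : ℝ, g₁ x ≤ Real.exp (-Λ^2/2) * (4 * Λ⁻¹) :=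
      mul_le_mul_of_nonneg_left hg1_val (Real.exp_pos _).le
    linarith
  have hG2 : ∫ x in Set.Ioi Λ, g₂ x * Real.exp (-x^2/2)
      ≤ Real.exp (-Λ^2/2) * (4 * Λ⁻¹) := by
    have hstep1 : ∫ x in Set.Ioi Λ, g₂ x * Real.exp (-x^2/2)
        ≤ ∫ x in Set.Ioi Λ, Real.exp (-Λ^2/2) * g₂ x := by
      refine setIntegral_mono_on g2w.integrableOn
        ((hg2_int.const_mul _).integrableOn) measurableSet_Ioi ?_
      intro x hx
      rw [mul_comm (Real.exp (-Λ^2/2)) (g₂ x)]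
      exact mul_le_mul_of_nonneg_left (hwE x hx) (hg2_nonneg x)
    have hstep2 : ∫ x in Set.Ioi Λ, Real.exp (-Λ^2/2) * g₂ x
        ≤ ∫ x : ℝ, Real.exp (-Λ^2/2) * g₂ x :=
      setIntegral_le_integral (hg2_int.const_mul _)
        (Filter.Eventually.of_forall fun x => mul_nonneg (Real.exp_pos _).le (hg2_nonneg x))
    have hstep3 : ∫ x : ℝ, Real.exp (-Λ^2/2) * g₂ x = Real.exp (-Λ^2/2) * ∫ x : ℝ, g₂ x :=
      integral_const_mul _ _
    have hstep4 : Real.exp (-Λ^2/2) * ∫ x : ℝ, g₂ x ≤ Real.exp (-Λ^2/2) * (4 * Λ⁻¹) :=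
      mul_le_mul_of_nonneg_left hg2_val (Real.exp_pos _).le
    linarith
  have hsplit : ∫ x in Set.Ioi Λ,
      (Real.log 2 + 3 * Real.log Λ + (x / Λ - 1) + g₁ x + g₂ x) * Real.exp (-x^2/2)
      = ((Real.log 2 + 3 * Real.log Λ - 1) * (∫ x in Set.Ioi Λ, Real.exp (-x^2/2))
          + Λ⁻¹ * (∫ x in Set.Ioi Λ, x * Real.exp (-x^2/2)))
        + ((∫ x in Set.Ioi Λ, g₁ x * Real.exp (-x^2/2))
          + (∫ x in Set.Ioi Λ, g₂ x * Real.exp (-x^2/2))) := by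
    have hA : Integrable (fun x : ℝ => (Real.log 2 + 3 * Real.log Λ - 1) * Real.exp (-x^2/2)
        + Λ⁻¹ * (x * Real.exp (-x^2/2))) :=
      (aux_w_int.const_mul _).add (aux_xw_int.const_mul _)
    have hB : Integrable (fun x : ℝ => g₁ x * Real.exp (-x^2/2) + g₂ x * Real.exp (-x^2/2)) :=
      g1w.add g2w
    have hA1 : Integrable (fun x : ℝ => (Real.log 2 + 3 * Real.log Λ - 1) * Real.exp (-x^2/2)) :=
      aux_w_int.const_mul _
    have hA2 : Integrable (fun x : ℝ => Λ⁻¹ * (x * Real.exp (-x^2/2))) :=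
      aux_xw_int.const_mul _
    rw [heq]
    rw [integral_add hA.integrableOn hB.integrableOn]
    rw [integral_add hA1.integrableOn hA2.integrableOn]
    rw [integral_add g1w.integrableOn g2w.integrableOn]
    rw [integral_const_mul, integral_const_mul]
  have hxwval := aux_xw_val Λ
  -- final numeric assembly
  have hE8 : Λ⁻¹ * Real.exp (-Λ^2/2) ≤ 8 * ∫ x in Set.Ioi Λ, Real.exp (-x^2/2) := by
    have h := mul_le_mul_of_nonneg_left hED (by positivity : (0:ℝ) ≤ Λ⁻¹)
    have h2 : Λ⁻¹ * (8 * Λ * ∫ x in Set.Ioi Λ, Real.exp (-x^2/2))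
        = 8 * ∫ x in Set.Ioi Λ, Real.exp (-x^2/2) := by
      field_simp
    linarith
  have hHle : ∫ x in Set.Ioi Λ,
      (Real.log 2 + 3 * Real.log Λ + (x / Λ - 1) + g₁ x + g₂ x) * Real.exp (-x^2/2)
      ≤ 200 * Real.log Λ * ∫ x in Set.Ioi Λ, Real.exp (-x^2/2) := by
    rw [hsplit, hxwval]
    have hb1 : Real.exp (-Λ^2/2) * (4 * Λ⁻¹) = 4 * (Λ⁻¹ * Real.exp (-Λ^2/2)) := by ring
    have h197 : (Real.log 2 + 71) * (∫ x in Set.Ioi Λ, Real.exp (-x^2/2))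
        ≤ 197 * Real.log Λ * ∫ x in Set.Ioi Λ, Real.exp (-x^2/2) := by
      have hfac : Real.log 2 + 71 ≤ 197 * Real.log Λ := by nlinarith
      exact mul_le_mul_of_nonneg_right hfac hD0.le
    nlinarith [hG1, hG2, hE8, hD0, h197, hb1]
  linarith
theorem stmt12 :
    ∃ C : ℝ, 0 < C ∧ ∀ Λ : ℝ, 2 < Λ → ∀ a : ℂ,
      (∫ x in Set.Ioi Λ, min (Real.log ‖1 - a * (x : ℂ)‖) 0 *
          Real.exp (-x ^ 2 / 2)) /
          (∫ x in Set.Ioi Λ, Real.exp (-x ^ 2 / 2)) ≥ -(C * Real.log Λ) := by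
  refine ⟨200, by norm_num, ?_⟩
  intro Λ hΛ a
  have hΛ0 : (0:ℝ) < Λ := by linarith
  have hD0 : (0:ℝ) < ∫ x in Set.Ioi Λ, Real.exp (-x ^ 2 / 2) := by
    have h := aux_D_lb hΛ
    nlinarith [Real.exp_pos (-Λ^2/2)]
  rw [ge_iff_le, le_div_iff₀ hD0]
  have hδ0 : (0:ℝ) < (Λ⁻¹)^2 := by positivity
  have hsq : Real.sqrt ((Λ⁻¹)^2) = Λ⁻¹ := Real.sqrt_sq (by positivity)
  refine main_est hΛ _
    ((Set.Ioo (‖a‖⁻¹) (‖a‖⁻¹ + (Λ⁻¹)^2)).indicator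
      (fun y => 2 / Real.sqrt (y - ‖a‖⁻¹)))
    ((Set.Ioo (‖a‖⁻¹ - (Λ⁻¹)^2) (‖a‖⁻¹)).indicator
      (fun y => 2 / Real.sqrt (‖a‖⁻¹ - y)))
    (‖a‖⁻¹) ?_ (fun x => min_le_right _ _)
    (aux_g1_int _ hδ0.le) (aux_g2_int _ hδ0.le)
    (fun x => Set.indicator_nonneg (fun y _ => by positivity) x)
    (fun x => Set.indicator_nonneg (fun y _ => by positivity) x)
    (le_of_eq (by rw [aux_g1_val _ hδ0.le, hsq]))
    (le_of_eq (by rw [aux_g2_val _ hδ0.le, hsq]))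
    ?_
  · -- measurability of F
    apply Measurable.aestronglyMeasurable
    refine Measurable.min ?_ measurable_const
    apply Real.measurable_log.comp
    apply Continuous.measurable
    exact continuous_norm.comp (by continuity)
  · -- key pointwise bound
    intro x hx hxt
    have hx0 : (0:ℝ) < x := lt_trans hΛ0 hx
    have hB : |1 - ‖a‖ * x| ≤ ‖1 - a * (x:ℂ)‖ := by
      have h := abs_norm_sub_norm_le (1:ℂ) (a * (x:ℂ))
      simpa [norm_mul, Complex.norm_real, abs_of_pos hx0] using h
    exact key_real hΛ hx (norm_nonneg _) rfl rfl hxt hB
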